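/- Under the user adjacency relation with post-attribution contribution bound enforcement with bound r (each weighted (impression, conversion, w) triple is added to the attributed dataset only if the user's remaining contribution bound is at least w, in which case w is deducted), for any attribution rule, any two adjacent datasets (differing by adding all impressions and conversions of a single user) yield attributed datasets at ℓ1-distance at most r. -/

import Mathlib

/-! Framework for differentially private ad conversion measurement
(Delaney et al., "Differentially Private Ad Conversion Measurement"). -/

structure Impression where
  time : ℕ
  user : ℕ
  pub : ℕ
  adv : ℕ
  id : ℕ
deriving DecidableEq

structure Conversion where
  time : ℕ
  user : ℕ
  adv : ℕ
  id : ℕ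
deriving DecidableEq

structure Dataset where
  imps : List Impression
  convs : List Conversion

/-- An attribution rule maps a time-ordered list of impressions and a conversion
to a list of credits (one per impression). -/
abbrev AttrRule := List Impression → Conversion → List ℝ

/-- A valid attribution rule outputs one nonnegative weight per impression, summing to 1. -/
def ValidRule (a : AttrRule) : Prop :=
  ∀ is c, is ≠ [] →
    (a is c).length = is.length ∧ (a is c).sum = 1 ∧ ∀ w ∈ a is c, (0 : ℝ) ≤ w

/-- Impressions eligible for attribution of conversion `c`: those occurring earlier
with the same user and advertiser. -/
def eligible (D : Dataset) (c : Conversion) : List Impression :=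
  D.imps.filter fun i => decide (i.time < c.time ∧ i.user = c.user ∧ i.adv = c.adv)

/-- ℓ₁ distance between attributed datasets. -/
noncomputable def l1dist (w w' : (Impression × Conversion) →₀ ℝ) : ℝ :=
  (w - w').sum fun _ v => |v|

/-- Impressions and conversions are listed in time order. -/
def SortedDS (D : Dataset) : Prop :=
  D.imps.Pairwise (fun i j => i.time ≤ j.time) ∧
  D.convs.Pairwise (fun c c' => c.time ≤ c'.time)

/-- Inner loop of post-attribution contribution-bound enforcement: each weighted
(impression, conversion) pair is kept only if the remaining bound of its scope covers
the weight, in which case the weight is deducted. -/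
noncomputable def applyPairs {σ : Type} [DecidableEq σ] (s : Impression → σ) (c : Conversion) :
    List (Impression × ℝ) → (σ → ℝ) × ((Impression × Conversion) →₀ ℝ) →
      (σ → ℝ) × ((Impression × Conversion) →₀ ℝ)
  | [], st => st
  | (i, w) :: rest, st =>
      if w ≤ st.1 (s i) then
        applyPairs s c rest
          (Function.update st.1 (s i) (st.1 (s i) - w), st.2 + Finsupp.single (i, c) w)
      else
        applyPairs s c rest st

/-- Attribution with post-attribution contribution bound enforcement (Algorithm 1),
with contribution bounding scope map `s` and contribution bound `r`. -/
noncomputable def postAttr {σ : Type} [DecidableEq σ] (a : AttrRule) (s : Impression → σ)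
    (r : ℝ) (D : Dataset) : (Impression × Conversion) →₀ ℝ :=
  (D.convs.foldl
    (fun st c => applyPairs s c ((eligible D c).zip (a (eligible D c) c)) st)
    ((fun _ => r : σ → ℝ), (0 : (Impression × Conversion) →₀ ℝ))).2

/-- Attribution with pre-attribution contribution bound enforcement (Algorithm 2):
for each conversion, every scope with an eligible impression pays one unit of its bound
if available, otherwise its impressions are excluded from attribution. -/
noncomputable def preAttr {σ : Type} [DecidableEq σ] (a : AttrRule) (s : Impression → σ)
    (r : ℝ) (D : Dataset) : (Impression × Conversion) →₀ ℝ :=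
  (D.convs.foldl
    (fun (st : (σ → ℝ) × ((Impression × Conversion) →₀ ℝ)) c =>
      let el := eligible D c
      let surv := el.filter fun i => decide ((1 : ℝ) ≤ st.1 (s i))
      let scopes := (el.map s).dedup
      ((fun x => if x ∈ scopes ∧ (1 : ℝ) ≤ st.1 x then st.1 x - 1 else st.1 x : σ → ℝ),
        st.2 + ((surv.zip (a surv c)).map fun p => Finsupp.single (p.1, c) p.2).sum))
    ((fun _ => r : σ → ℝ), (0 : (Impression × Conversion) →₀ ℝ))).2

/-- Attribution without any contribution bound enforcement. -/
noncomputable def attrNoCap (a : AttrRule) (D : Dataset) :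
    (Impression × Conversion) →₀ ℝ :=
  (D.convs.map fun c =>
    (((eligible D c).zip (a (eligible D c) c)).map fun p => Finsupp.single (p.1, c) p.2).sum).sum

/-- Adjacency: `D'` results from `D` by adding a single impression (in time order). -/
def AddOneImpression (D D' : Dataset) : Prop :=
  ∃ (i0 : Impression) (l₁ l₂ : List Impression),
    D.imps = l₁ ++ l₂ ∧ D'.imps = l₁ ++ i0 :: l₂ ∧ D.convs = D'.convs

/-- Adjacency: `D` results from `D'` by removing all impressions whose scope (under `si`)
is `v` and all conversions whose scope (under `sc`) is `v`. -/
def RemovesScope {σ : Type} [DecidableEq σ] (si : Impression → σ)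
    (sc : Conversion → Option σ) (v : σ) (D D' : Dataset) : Prop :=
  D.imps = D'.imps.filter (fun i => decide (si i ≠ v)) ∧
  D.convs = D'.convs.filter (fun c => decide (sc c ≠ some v))

/-- First-touch attribution. -/
noncomputable def FTA : AttrRule := fun is _ =>
  match is with
  | [] => []
  | _ :: t => 1 :: t.map fun _ => 0

/-- Last-touch attribution. -/
noncomputable def LTA : AttrRule := fun is _ =>
  match is with
  | [] => []
  | _ :: _ => List.replicate (is.length - 1) 0 ++ [1]

/-- Uniform multi-touch attribution. -/
noncomputable def UNI : AttrRule := fun is _ => is.map fun _ => ((is.length : ℝ))⁻¹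

/-- U-shaped attribution. -/
noncomputable def USH : AttrRule := fun is _ =>
  match is with
  | [] => []
  | [_] => [1]
  | [_, _] => [0.5, 0.5]
  | _ :: _ :: _ :: _ =>
      (0.4 : ℝ) :: (List.replicate (is.length - 2) ((0.2 : ℝ) / ((is.length : ℝ) - 2)) ++ [0.4])

/-- Exponential time decay attribution with half-life `th`. -/
noncomputable def EXPR (th : ℝ) : AttrRule := fun is c =>
  let wt : Impression → ℝ := fun i => (2 : ℝ) ^ (-(((c.time : ℝ) - (i.time : ℝ)) / th))
  is.map fun i => wt i / (is.map wt).sum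

section Aux

/-- Sum of the values of a finsupp. -/
noncomputable def fsum (Δ : (Impression × Conversion) →₀ ℝ) : ℝ := Δ.sum fun _ v => v

lemma fsum_zero : fsum 0 = 0 := Finsupp.sum_zero_index

lemma fsum_add (φ ψ : (Impression × Conversion) →₀ ℝ) :
    fsum (φ + ψ) = fsum φ + fsum ψ :=
  Finsupp.sum_add_index' (fun _ => rfl) (fun _ _ _ => rfl)

lemma fsum_single (p : Impression × Conversion) (w : ℝ) :
    fsum (Finsupp.single p w) = w :=
  Finsupp.sum_single_index rfl

variable {σ : Type} [DecidableEq σ]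

/-- `applyPairs` where no pair has scope `u`: decisions depend only on budgets off `u`. -/
lemma applyPairs_off (s : Impression → σ) (c : Conversion) (u : σ) :
    ∀ (l : List (Impression × ℝ)) (b b' : σ → ℝ)
      (φ φ' : (Impression × Conversion) →₀ ℝ),
    (∀ x, x ≠ u → b' x = b x) → (∀ p ∈ l, s p.1 ≠ u) →
    (∀ x, x ≠ u → (applyPairs s c l (b', φ')).1 x = (applyPairs s c l (b, φ)).1 x) ∧
    (applyPairs s c l (b', φ')).1 u = b' u ∧
    (applyPairs s c l (b', φ')).2 - φ' = (applyPairs s c l (b, φ)).2 - φ := by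
  intro l
  induction l with
  | nil =>
    intro b b' φ φ' hb _
    refine ⟨fun x hx => hb x hx, rfl, by simp [applyPairs]⟩
  | cons p rest ih =>
    intro b b' φ φ' hb hl
    obtain ⟨i, w⟩ := p
    have hsi : s i ≠ u := hl (i, w) List.mem_cons_self
    have hbi : b' (s i) = b (s i) := hb _ hsi
    have hrest : ∀ p ∈ rest, s p.1 ≠ u := fun p hp => hl p (List.mem_cons_of_mem _ hp)
    by_cases hw : w ≤ b (s i)
    · have hw' : w ≤ b' (s i) := hbi ▸ hw
      simp only [applyPairs, hw, hw', if_true]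
      have hb2 : ∀ x, x ≠ u →
          (Function.update b' (s i) (b' (s i) - w)) x =
          (Function.update b (s i) (b (s i) - w)) x := by
        intro x hx
        by_cases hxi : x = s i
        · subst hxi; simp [hbi]
        · simp [Function.update_of_ne hxi, hb x hx]
      obtain ⟨h1, h2, h3⟩ := ih _ _ (φ + Finsupp.single (i, c) w)
        (φ' + Finsupp.single (i, c) w) hb2 hrest
      refine ⟨h1, ?_, ?_⟩
      · rw [h2, Function.update_of_ne (Ne.symm hsi)]
      · have := h3
        abel_nf at this ⊢
        linear_combination (norm := abel_nf) this
    · have hw' : ¬ w ≤ b' (s i) := hbi ▸ hw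
      simp only [applyPairs, hw, hw', if_false]
      exact ih _ _ _ _ hb hrest

/-- `applyPairs` where every pair has scope `u`. -/
lemma applyPairs_u (s : Impression → σ) (c : Conversion) (u : σ) :
    ∀ (l : List (Impression × ℝ)) (b : σ → ℝ) (φ : (Impression × Conversion) →₀ ℝ),
    (∀ p ∈ l, s p.1 = u) → (∀ p ∈ l, 0 ≤ p.2) →
    (∀ x, x ≠ u → (applyPairs s c l (b, φ)).1 x = b x) ∧
    ((applyPairs s c l (b, φ)).1 u = b u ∨ 0 ≤ (applyPairs s c l (b, φ)).1 u) ∧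
    ∃ Δ : (Impression × Conversion) →₀ ℝ,
      (applyPairs s c l (b, φ)).2 = φ + Δ ∧ (∀ q, 0 ≤ Δ q) ∧
      fsum Δ = b u - (applyPairs s c l (b, φ)).1 u := by
  intro l
  induction l with
  | nil =>
    intro b φ _ _
    exact ⟨fun _ _ => rfl, Or.inl rfl, 0, by simp [applyPairs], fun q => le_refl 0,
      by simp [applyPairs, fsum_zero]⟩
  | cons p rest ih =>
    intro b φ hl hw0
    obtain ⟨i, w⟩ := p
    have hsi : s i = u := hl (i, w) List.mem_cons_self
    have hwi : 0 ≤ w := hw0 (i, w) List.mem_cons_self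
    have hrest1 : ∀ p ∈ rest, s p.1 = u := fun p hp => hl p (List.mem_cons_of_mem _ hp)
    have hrest2 : ∀ p ∈ rest, 0 ≤ p.2 := fun p hp => hw0 p (List.mem_cons_of_mem _ hp)
    by_cases hw : w ≤ b (s i)
    · simp only [applyPairs, hw, if_true]
      obtain ⟨h1, h2, Δ, hΔ1, hΔ2, hΔ3⟩ := ih (Function.update b (s i) (b (s i) - w))
        (φ + Finsupp.single (i, c) w) hrest1 hrest2
      have hupd_u : (Function.update b (s i) (b (s i) - w)) u = b u - w := by
        rw [← hsi]; simp
      have hupd_off : ∀ x, x ≠ u → (Function.update b (s i) (b (s i) - w)) x = b x := by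
        intro x hx
        rw [Function.update_of_ne (by rw [hsi]; exact hx)]
      refine ⟨fun x hx => (h1 x hx).trans (hupd_off x hx), ?_, ?_⟩
      · rcases h2 with h2 | h2
        · right; rw [h2, hupd_u]; linarith [hw, hsi ▸ hw]
        · right; exact h2
      · refine ⟨Finsupp.single (i, c) w + Δ, by rw [hΔ1]; abel, ?_, ?_⟩
        · intro q
          have : (0:ℝ) ≤ (Finsupp.single (i, c) w) q := by
            classical
            rcases eq_or_ne q (i, c) with h | h
            · subst h; simp [hwi]
            · simp [Finsupp.single_eq_of_ne' (Ne.symm h)]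
          have h2 := hΔ2 q
          simp only [Finsupp.add_apply]
          linarith
        · rw [fsum_add, fsum_single, hΔ3, hupd_u]
          have : b (s i) = b u := by rw [hsi]
          ring
    · simp only [applyPairs, hw, if_false]
      exact ih b φ hrest1 hrest2

/-- Main fold invariant for Theorem A.3. -/
lemma main_fold (a : AttrRule) (ha : ValidRule a) (u : ℕ) (D D' : Dataset)
    (hE : ∀ c : Conversion, c.user ≠ u → eligible D c = eligible D' c)
    (hU : ∀ (c : Conversion) (i : Impression), i ∈ eligible D' c → i.user = c.user) :
    ∀ (L : List Conversion) (b b' : ℕ → ℝ)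
      (φ φ' Δ : (Impression × Conversion) →₀ ℝ),
    (∀ x, x ≠ u → b' x = b x) → φ' = φ + Δ → (∀ q, 0 ≤ Δ q) →
    ∃ Δ' : (Impression × Conversion) →₀ ℝ,
      (L.foldl (fun st c => applyPairs (fun i => i.user) c
          ((eligible D' c).zip (a (eligible D' c) c)) st) (b', φ')).2
        = ((L.filter fun c => decide (c.user ≠ u)).foldl
            (fun st c => applyPairs (fun i => i.user) c
              ((eligible D c).zip (a (eligible D c) c)) st) (b, φ)).2 + Δ' ∧
      (∀ q, 0 ≤ Δ' q) ∧
      fsum Δ' - fsum Δ ≤ b' u -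
        (L.foldl (fun st c => applyPairs (fun i => i.user) c
          ((eligible D' c).zip (a (eligible D' c) c)) st) (b', φ')).1 u ∧
      ((L.foldl (fun st c => applyPairs (fun i => i.user) c
          ((eligible D' c).zip (a (eligible D' c) c)) st) (b', φ')).1 u = b' u ∨
        0 ≤ (L.foldl (fun st c => applyPairs (fun i => i.user) c
          ((eligible D' c).zip (a (eligible D' c) c)) st) (b', φ')).1 u) := by
  intro L
  induction L with
  | nil =>
    intro b b' φ φ' Δ hb hφ hΔ
    exact ⟨Δ, by simpa using hφ, hΔ, by simp, Or.inl rfl⟩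
  | cons c L ih =>
    intro b b' φ φ' Δ hb hφ hΔ
    by_cases hc : c.user = u
    · -- conversion of user u: dropped on the D side
      have hfil : (c :: L).filter (fun c => decide (c.user ≠ u))
          = L.filter (fun c => decide (c.user ≠ u)) := by
        simp [List.filter_cons, hc]
      rw [hfil]
      have hscope : ∀ p ∈ (eligible D' c).zip (a (eligible D' c) c),
          (fun i => i.user) p.1 = u := by
        intro p hp
        have := hU c p.1 (List.of_mem_zip hp).1
        simpa [hc] using this
      have hwts : ∀ p ∈ (eligible D' c).zip (a (eligible D' c) c), (0:ℝ) ≤ p.2 := by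
        intro p hp
        rcases List.of_mem_zip hp with ⟨_, hp2⟩
        rcases eq_or_ne (eligible D' c) [] with he | he
        · rw [he] at hp; simp at hp
        · exact (ha _ c he).2.2 _ hp2
      obtain ⟨h1, h2, Δc, hΔc1, hΔc2, hΔc3⟩ :=
        applyPairs_u (fun i => i.user) c u ((eligible D' c).zip (a (eligible D' c) c))
          b' φ' hscope hwts
      set st'' := applyPairs (fun i => i.user) c
        ((eligible D' c).zip (a (eligible D' c) c)) (b', φ') with hst''
      have hb2 : ∀ x, x ≠ u → st''.1 x = b x := fun x hx => (h1 x hx).trans (hb x hx)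
      have hφ2 : st''.2 = φ + (Δ + Δc) := by rw [hΔc1, hφ]; abel
      have hΔ2 : ∀ q, 0 ≤ (Δ + Δc) q := by
        intro q; have := hΔ q; have := hΔc2 q
        simp only [Finsupp.add_apply]; linarith
      obtain ⟨Δ', hA, hB, hC, hD2⟩ := ih b st''.1 φ st''.2 (Δ + Δc) hb2 hφ2 hΔ2
      simp only [List.foldl_cons]
      rw [← hst'']
      simp only [Prod.mk.eta] at hA hC hD2
      refine ⟨Δ', hA, hB, ?_, ?_⟩
      · rw [fsum_add] at hC
        have : fsum Δc = b' u - st''.1 u := hΔc3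
        linarith
      · rcases hD2 with h | h
        · rcases h2 with h2 | h2
          · exact Or.inl (h.trans h2)
          · exact Or.inr (h ▸ h2)
        · exact Or.inr h
    · -- conversion of another user: both sides take the same step
      have hfil : (c :: L).filter (fun c => decide (c.user ≠ u))
          = c :: L.filter (fun c => decide (c.user ≠ u)) := by
        simp [List.filter_cons, hc]
      rw [hfil]
      have hEc : eligible D c = eligible D' c := hE c hc
      have hscope : ∀ p ∈ (eligible D' c).zip (a (eligible D' c) c),
          (fun i => i.user) p.1 ≠ u := by
        intro p hp
        have := hU c p.1 (List.of_mem_zip hp).1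
        simpa [this] using hc
      obtain ⟨h1, h2, h3⟩ :=
        applyPairs_off (fun i => i.user) c u ((eligible D' c).zip (a (eligible D' c) c))
          b b' φ φ' hb hscope
      set stD := applyPairs (fun i => i.user) c
        ((eligible D' c).zip (a (eligible D' c) c)) (b, φ) with hstD
      set st'' := applyPairs (fun i => i.user) c
        ((eligible D' c).zip (a (eligible D' c) c)) (b', φ') with hst''
      have hφ2 : st''.2 = stD.2 + Δ := by
        have : st''.2 - φ' = stD.2 - φ := h3
        rw [hφ] at this
        linear_combination (norm := abel_nf) this
      obtain ⟨Δ', hA, hB, hC, hD2⟩ := ih stD.1 st''.1 stD.2 st''.2 Δ h1 hφ2 hΔ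
      simp only [List.foldl_cons]
      rw [hEc, ← hstD, ← hst'']
      simp only [Prod.mk.eta] at hA hC hD2
      refine ⟨Δ', hA, hB, by rw [← h2]; exact hC, ?_⟩
      rcases hD2 with h | h
      · exact Or.inl (h.trans h2)
      · exact Or.inr h

lemma fsum_abs_neg (Δ : (Impression × Conversion) →₀ ℝ) (h : ∀ q, 0 ≤ Δ q) :
    (-Δ).sum (fun _ v => |v|) = fsum Δ := by
  unfold fsum Finsupp.sum
  rw [Finsupp.support_neg]
  apply Finset.sum_congr rfl
  intro q _
  simp [abs_of_nonneg (h q)]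

end Aux

/-- Theorem A.3: for any attribution rule, the user adjacency relation with
post-attribution contribution bound enforcement (bound `r`, per-user scope) yields
attributed datasets at ℓ₁-distance at most `r`. -/
theorem post_attr_user_valid (a : AttrRule) (ha : ValidRule a) (r : ℕ) (hr : 0 < r)
    (u : ℕ) (D D' : Dataset) (hD' : SortedDS D')
    (hadj : RemovesScope (fun i => i.user) (fun c => some c.user) u D D') :
    l1dist (postAttr a (fun i => i.user) (r : ℝ) D)
      (postAttr a (fun i => i.user) (r : ℝ) D') ≤ (r : ℝ) := by
  obtain ⟨hI, hC⟩ := hadj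
  have hE : ∀ c : Conversion, c.user ≠ u → eligible D c = eligible D' c := by
    intro c hc
    unfold eligible
    rw [hI, List.filter_filter]
    apply List.filter_congr
    intro i _
    by_cases h : i.time < c.time ∧ i.user = c.user ∧ i.adv = c.adv
    · have hne : i.user ≠ u := by rw [h.2.1]; exact hc
      simp [h, hne, hc]
    · simp [h]
  have hU : ∀ (c : Conversion) (i : Impression), i ∈ eligible D' c → i.user = c.user := by
    intro c i hi
    have := (List.mem_filter.1 hi).2
    exact (of_decide_eq_true this).2.1
  have hconvs : D.convs = D'.convs.filter fun c => decide (c.user ≠ u) := by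
    rw [hC]
    apply List.filter_congr
    intro c _
    simp
  obtain ⟨Δ', hA, hB, hCc, hD2⟩ := main_fold a ha u D D' hE hU D'.convs
    (fun _ => (r : ℝ)) (fun _ => (r : ℝ)) 0 0 0 (fun _ _ => rfl) (by simp)
    (fun q => le_refl 0)
  unfold postAttr
  rw [hconvs, hA]
  unfold l1dist
  set X := ((D'.convs.filter fun c => decide (c.user ≠ u)).foldl
    (fun st c => applyPairs (fun i => i.user) c
      ((eligible D c).zip (a (eligible D c) c)) st)
    ((fun _ => (r : ℝ)), (0 : (Impression × Conversion) →₀ ℝ))).2 with hX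
  have hneg : X - (X + Δ') = -Δ' := by abel
  rw [hneg, fsum_abs_neg Δ' hB]
  rw [fsum_zero] at hCc
  have hr0 : (0 : ℝ) ≤ (r : ℝ) := Nat.cast_nonneg r
  rcases hD2 with h | h
  · rw [h] at hCc; linarith
  · linarith
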